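/- arXiv:2302.00532 — 2 statements merged into one kernel-verified Lean document; each statement's English description precedes it below -/
import Mathlib

section
/- Let 0<q<1 and 0<α<1, and for an integer k≥1 set M_q(k) := Γ_q(α+1)^{−1}/Γ_q(α(k−1)+1) − 1/Γ_q(αk+1). Then there exist a constant c>0 and an integer K≥1, both depending only on q and α, such that for every integer k≥K one has M_q(k) ≥ c·(1−q)^{(α−1)k}/Γ_q(k+1). -/
set_option maxHeartbeats 1000000

open scoped BigOperators

/-- The infinite q-Pochhammer symbol `(a;q)_∞ = ∏_{j=0}^∞ (1 - q^j a)`. -/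
noncomputable def qPochInf (q a : ℝ) : ℝ := ∏' j : ℕ, (1 - q ^ j * a)

/-- The q-gamma function `Γ_q(x) = ((q;q)_∞/(q^x;q)_∞)·(1-q)^{1-x}`. -/
noncomputable def qGamma (q x : ℝ) : ℝ :=
  (qPochInf q q / qPochInf q (q ^ x)) * (1 - q) ^ (1 - x)

/-- `M_q(k) = Γ_q(α+1)⁻¹/Γ_q(α(k−1)+1) − 1/Γ_q(αk+1)`. -/
noncomputable def Mq (q α : ℝ) (k : ℕ) : ℝ :=
  (qGamma q (α + 1))⁻¹ / qGamma q (α * ((k : ℝ) - 1) + 1) - 1 / qGamma q (α * k + 1)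

section helpers
variable {q : ℝ} (hq0 : 0 < q) (hq1 : q < 1)
include hq0 hq1

lemma factor_pos {a : ℝ} (ha0 : 0 ≤ a) (ha1 : a < 1) (j : ℕ) :
    0 < 1 - q ^ j * a := by
  have h1 : q ^ j ≤ 1 := pow_le_one₀ hq0.le hq1.le
  have h2 : q ^ j * a ≤ a := by nlinarith [pow_nonneg hq0.le j]
  linarith

lemma summable_log_qPoch {a : ℝ} (ha0 : 0 ≤ a) (ha1 : a < 1) :
    Summable fun j : ℕ => Real.log (1 - q ^ j * a) := by
  have hpos := factor_pos hq0 hq1 ha0 ha1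
  have hb : Summable fun j : ℕ => q ^ j * (a / (1 - a)) :=
    (summable_geometric_of_lt_one hq0.le hq1).mul_right _
  apply Summable.of_abs
  refine hb.of_nonneg_of_le (fun j => abs_nonneg _) fun j => ?_
  · 
    have hqj0 : 0 ≤ q ^ j := pow_nonneg hq0.le j
    have hqj1 : q ^ j ≤ 1 := pow_le_one₀ hq0.le hq1.le
    have hx0 : 0 ≤ q ^ j * a := mul_nonneg hqj0 ha0
    have hxa : q ^ j * a ≤ a := by nlinarith
    have hlnp : Real.log (1 - q ^ j * a) ≤ 0 :=
      Real.log_nonpos (by linarith [hpos j]) (by linarith)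
    rw [abs_of_nonpos hlnp, ← Real.log_inv]
    have := Real.log_le_sub_one_of_pos (inv_pos.2 (hpos j))
    have hne : (1 - q ^ j * a) ≠ 0 := ne_of_gt (hpos j)
    have h1 : (1 - q ^ j * a)⁻¹ - 1 = (q ^ j * a) / (1 - q ^ j * a) := by
      field_simp
      ring
    have h2 : (q ^ j * a) / (1 - q ^ j * a) ≤ (q ^ j * a) / (1 - a) := by
      rw [div_le_div_iff₀ (hpos j) (by linarith)]
      nlinarith
    calc Real.log (1 - q ^ j * a)⁻¹ ≤ (1 - q ^ j * a)⁻¹ - 1 := this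
      _ = (q ^ j * a) / (1 - q ^ j * a) := h1
      _ ≤ (q ^ j * a) / (1 - a) := h2
      _ = q ^ j * (a / (1 - a)) := by ring

lemma hasProd_qPoch {a : ℝ} (ha0 : 0 ≤ a) (ha1 : a < 1) :
    HasProd (fun j : ℕ => 1 - q ^ j * a) (qPochInf q a) := by
  have : Multipliable fun j : ℕ => 1 - q ^ j * a := by
    exact Real.multipliable_of_summable_log (fun j => factor_pos hq0 hq1 ha0 ha1 j)
      (summable_log_qPoch hq0 hq1 ha0 ha1)
  exact this.hasProd

lemma qPoch_pos {a : ℝ} (ha0 : 0 ≤ a) (ha1 : a < 1) : 0 < qPochInf q a := by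
  have := Real.rexp_tsum_eq_tprod (f := fun j => 1 - q ^ j * a)
      (fun j => factor_pos hq0 hq1 ha0 ha1 j)
      (summable_log_qPoch hq0 hq1 ha0 ha1)
  have h : qPochInf q a = Real.exp (∑' j : ℕ, Real.log (1 - q ^ j * a)) := by
    rw [qPochInf, ← this]
  rw [h]; exact Real.exp_pos _

lemma qPoch_le_one {a : ℝ} (ha0 : 0 ≤ a) (ha1 : a < 1) : qPochInf q a ≤ 1 := by
  refine le_of_tendsto' (hasProd_qPoch hq0 hq1 ha0 ha1) fun n => Finset.prod_le_one ?_ ?_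
  · exact fun j _ => (factor_pos hq0 hq1 ha0 ha1 j).le
  · intro j _
    have : 0 ≤ q ^ j * a := mul_nonneg (pow_nonneg hq0.le j) ha0
    linarith

omit hq0 hq1 in
lemma one_sub_sum_le_prod {ι : Type*} (s : Finset ι) (x : ι → ℝ)
    (h0 : ∀ i ∈ s, 0 ≤ x i) (h1 : ∀ i ∈ s, x i ≤ 1) :
    1 - ∑ i ∈ s, x i ≤ ∏ i ∈ s, (1 - x i) := by
  induction s using Finset.cons_induction with
  | empty => simp
  | cons a s ha ih =>
    rw [Finset.prod_cons, Finset.sum_cons]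
    have hih := ih (fun i hi => h0 i (Finset.mem_cons_of_mem hi))
      (fun i hi => h1 i (Finset.mem_cons_of_mem hi))
    have hs0 : 0 ≤ ∑ i ∈ s, x i :=
      Finset.sum_nonneg fun i hi => h0 i (Finset.mem_cons_of_mem hi)
    have hp0 : (0:ℝ) ≤ ∏ i ∈ s, (1 - x i) :=
      Finset.prod_nonneg fun i hi => by
        have := h1 i (Finset.mem_cons_of_mem hi); linarith
    have ha0 := h0 a (Finset.mem_cons_self a s)
    have ha1 := h1 a (Finset.mem_cons_self a s)
    nlinarith

lemma qPoch_lower {a : ℝ} (ha0 : 0 ≤ a) (ha1 : a < 1) :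
    1 - a / (1 - q) ≤ qPochInf q a := by
  refine le_hasProd_of_le_prod (hasProd_qPoch hq0 hq1 ha0 ha1) fun s => ?_
  have hsum : ∑ i ∈ s, q ^ i * a ≤ a / (1 - q) := by
    have h1 : ∑ i ∈ s, q ^ i * a ≤ ∑' i : ℕ, q ^ i * a :=
      Summable.sum_le_tsum s (fun i _ => mul_nonneg (pow_nonneg hq0.le i) ha0)
        ((summable_geometric_of_lt_one hq0.le hq1).mul_right _)
    have h2 : ∑' i : ℕ, q ^ i * a = (1 - q)⁻¹ * a := by
      rw [(summable_geometric_of_lt_one hq0.le hq1).tsum_mul_right,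
        tsum_geometric_of_lt_one hq0.le hq1]
    rw [h2] at h1
    calc ∑ i ∈ s, q ^ i * a ≤ (1 - q)⁻¹ * a := h1
      _ = a / (1 - q) := by ring
  have hfin := one_sub_sum_le_prod s (fun i => q ^ i * a)
    (fun i _ => mul_nonneg (pow_nonneg hq0.le i) ha0)
    (fun i _ => by
      show q ^ i * a ≤ 1
      have h1 : q ^ i ≤ 1 := pow_le_one₀ hq0.le hq1.le
      nlinarith [pow_nonneg hq0.le i, mul_nonneg (sub_nonneg.2 h1) ha0])
  linarith

lemma qPoch_anti {a b : ℝ} (ha0 : 0 ≤ a) (hab : a ≤ b) (hb1 : b < 1) :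
    qPochInf q b ≤ qPochInf q a := by
  have hb := hasProd_qPoch hq0 hq1 (ha0.trans hab) hb1
  have ha := hasProd_qPoch hq0 hq1 ha0 (lt_of_le_of_lt hab hb1)
  have key : ∀ s : Finset ℕ, ∏ j ∈ s, (1 - q ^ j * b) ≤ ∏ j ∈ s, (1 - q ^ j * a) := by
    intro s
    refine Finset.prod_le_prod (fun j _ => (factor_pos hq0 hq1 (ha0.trans hab) hb1 j).le)
      fun j _ => ?_
    have : 0 ≤ q ^ j := pow_nonneg hq0.le j
    nlinarith
  exact le_of_tendsto_of_tendsto' hb ha key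

lemma qPoch_rec {a : ℝ} (ha0 : 0 ≤ a) (ha1 : a < 1) :
    qPochInf q a = (1 - a) * qPochInf q (q * a) := by
  have hqa0 : 0 ≤ q * a := mul_nonneg hq0.le ha0
  have hqa1 : q * a < 1 := by nlinarith
  have heq : (fun j : ℕ => 1 - q ^ (j + 1) * a) = fun j : ℕ => 1 - q ^ j * (q * a) := by
    funext j; rw [pow_succ]; ring
  have hm : Multipliable fun j : ℕ => 1 - q ^ (j + 1) * a := by
    rw [heq]
    exact (hasProd_qPoch hq0 hq1 hqa0 hqa1).multipliable
  have h := tprod_eq_zero_mul' (f := fun j : ℕ => 1 - q ^ j * a) hm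
  have h2 : (∏' j : ℕ, (1 - q ^ (j + 1) * a)) = qPochInf q (q * a) := by
    refine tprod_congr fun j => ?_
    rw [pow_succ]; ring_nf
  rw [qPochInf]
  rw [h]
  rw [h2]
  norm_num

end helpers

lemma qGamma_inv {q : ℝ} (hu : (0:ℝ) ≤ 1 - q) (x : ℝ) :
    (qGamma q x)⁻¹ = qPochInf q (q ^ x) / qPochInf q q * (1 - q) ^ (x - 1) := by
  rw [qGamma, mul_inv, inv_div, ← Real.rpow_neg hu, neg_sub]

theorem Mq_lower_bound (q α : ℝ) (hq0 : 0 < q) (hq1 : q < 1)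
    (hα0 : 0 < α) (hα1 : α < 1) :
    ∃ c : ℝ, 0 < c ∧ ∃ K : ℕ, 1 ≤ K ∧ ∀ k : ℕ, K ≤ k →
      c * ((1 - q) ^ ((α - 1) * k) / qGamma q ((k : ℝ) + 1)) ≤ Mq q α k := by
  have hu : (0:ℝ) < 1 - q := by linarith
  have hCpos : 0 < qPochInf q q := qPoch_pos hq0 hq1 hq0.le hq1
  -- the constant A
  have hqa1 : q ^ (α + 1 : ℝ) < q := by
    have := Real.rpow_lt_rpow_of_exponent_gt hq0 hq1 (by linarith : (1:ℝ) < α + 1)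
    rwa [Real.rpow_one] at this
  have hqa0 : (0:ℝ) < q ^ (α + 1 : ℝ) := Real.rpow_pos_of_pos hq0 _
  have hqq1 : q * q < 1 := by nlinarith
  have hPa_rec : qPochInf q (q ^ (α + 1 : ℝ)) =
      (1 - q ^ (α + 1 : ℝ)) * qPochInf q (q * q ^ (α + 1 : ℝ)) :=
    qPoch_rec hq0 hq1 hqa0.le (by linarith)
  have hC_rec : qPochInf q q = (1 - q) * qPochInf q (q * q) :=
    qPoch_rec hq0 hq1 hq0.le hq1
  have hanti : qPochInf q (q * q) ≤ qPochInf q (q * q ^ (α + 1 : ℝ)) :=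
    qPoch_anti hq0 hq1 (mul_nonneg hq0.le hqa0.le) (mul_le_mul_of_nonneg_left hqa1.le hq0.le) hqq1
  have hqqpos : 0 < qPochInf q (q * q) :=
    qPoch_pos hq0 hq1 (mul_nonneg hq0.le hq0.le) hqq1
  have hqqA : 0 < qPochInf q (q * q ^ (α + 1 : ℝ)) := lt_of_lt_of_le hqqpos hanti
  have hCA : qPochInf q q < qPochInf q (q ^ (α + 1 : ℝ)) := by
    rw [hPa_rec, hC_rec]
    have s1 : (1 - q) * qPochInf q (q * q) ≤ (1 - q) * qPochInf q (q * q ^ (α + 1 : ℝ)) :=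
      mul_le_mul_of_nonneg_left hanti hu.le
    have s2 : (1 - q) * qPochInf q (q * q ^ (α + 1 : ℝ))
        < (1 - q ^ (α + 1 : ℝ)) * qPochInf q (q * q ^ (α + 1 : ℝ)) :=
      mul_lt_mul_of_pos_right (by linarith) hqqA
    linarith
  set A : ℝ := qPochInf q (q ^ (α + 1 : ℝ)) / qPochInf q q with hAdef
  have hA : 1 < A := (one_lt_div hCpos).2 hCA
  have hA0 : 0 < A := by linarith
  set c : ℝ := (A - 1) / 2 with hcdef
  have hc : 0 < c := by rw [hcdef]; linarith
  -- choose K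
  have hδ : 0 < (A - 1) * (1 - q) / (2 * A * q) :=
    div_pos (mul_pos (by linarith) hu) (mul_pos (mul_pos two_pos hA0) hq0)
  have hqα1 : q ^ (α : ℝ) < 1 := Real.rpow_lt_one hq0.le hq1 hα0
  have hqα0 : (0:ℝ) < q ^ (α : ℝ) := Real.rpow_pos_of_pos hq0 _
  obtain ⟨n, hn⟩ := exists_pow_lt_of_lt_one hδ hqα1
  refine ⟨c, hc, n + 1, Nat.le_add_left 1 n, fun k hk => ?_⟩
  have hk1 : 1 ≤ k := le_trans (Nat.le_add_left 1 n) hk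
  have hkr : (1:ℝ) ≤ (k:ℝ) := by exact_mod_cast hk1
  -- the small quantity
  have hcast : (k:ℝ) - 1 = ((k - 1 : ℕ) : ℝ) := by
    rw [Nat.cast_sub hk1]; norm_num
  have hsmall : q ^ (α * ((k:ℝ) - 1)) < (A - 1) * (1 - q) / (2 * A * q) := by
    have e1 : q ^ (α * ((k:ℝ) - 1)) = (q ^ (α:ℝ)) ^ (k - 1 : ℕ) := by
      rw [show α * ((k:ℝ) - 1) = α * ((k:ℝ) - 1) by rfl, hcast,
        show α * (((k - 1 : ℕ)):ℝ) = α * (((k - 1 : ℕ)):ℝ) by rfl,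
        Real.rpow_mul hq0.le, Real.rpow_natCast]
    have hnk : n ≤ k - 1 := Nat.le_sub_one_of_lt (lt_of_lt_of_le (Nat.lt_succ_self n) hk)
    have e2 : (q ^ (α:ℝ)) ^ (k - 1 : ℕ) ≤ (q ^ (α:ℝ)) ^ n :=
      pow_le_pow_of_le_one hqα0.le hqα1.le hnk
    rw [e1]; exact lt_of_le_of_lt e2 hn
  set t : ℝ := q ^ (α * ((k:ℝ) - 1)) with htdef
  have ht0 : 0 < t := Real.rpow_pos_of_pos hq0 _
  -- epsilon bound : A * (t * q / (1-q)) ≤ (A-1)/2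
  have hAq : 0 < A * q := mul_pos hA0 hq0
  have h1 : A * q * t < A * q * ((A - 1) * (1 - q) / (2 * A * q)) :=
    mul_lt_mul_of_pos_left hsmall hAq
  have h2 : A * q * ((A - 1) * (1 - q) / (2 * A * q)) = (A - 1) * (1 - q) / 2 := by
    field_simp
  have hε : A * (t * q / (1 - q)) ≤ (A - 1) / 2 := by
    rw [show A * (t * q / (1 - q)) = (A * q * t) / (1 - q) by ring]
    rw [div_le_iff₀ hu]
    linarith [h1, h2]
  -- pochhammer bounds
  have hx2pos : (0:ℝ) < α * ((k:ℝ) - 1) + 1 := by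
    have := mul_nonneg hα0.le (by linarith : (0:ℝ) ≤ (k:ℝ) - 1); linarith
  have hx3pos : (0:ℝ) < α * (k:ℝ) + 1 := by
    have := mul_nonneg hα0.le (by linarith : (0:ℝ) ≤ (k:ℝ)); linarith
  have hx4pos : (0:ℝ) < (k:ℝ) + 1 := by linarith
  have hb2 : (0:ℝ) < q ^ (α * ((k:ℝ) - 1) + 1) := Real.rpow_pos_of_pos hq0 _
  have hb2' : q ^ (α * ((k:ℝ) - 1) + 1) < 1 := Real.rpow_lt_one hq0.le hq1 hx2pos
  have hb3 : (0:ℝ) < q ^ (α * (k:ℝ) + 1) := Real.rpow_pos_of_pos hq0 _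
  have hb3' : q ^ (α * (k:ℝ) + 1) < 1 := Real.rpow_lt_one hq0.le hq1 hx3pos
  have hb4 : (0:ℝ) < q ^ ((k:ℝ) + 1) := Real.rpow_pos_of_pos hq0 _
  have hb4' : q ^ ((k:ℝ) + 1) < 1 := Real.rpow_lt_one hq0.le hq1 hx4pos
  have hP1low : 1 - q ^ (α * ((k:ℝ) - 1) + 1) / (1 - q)
      ≤ qPochInf q (q ^ (α * ((k:ℝ) - 1) + 1)) := qPoch_lower hq0 hq1 hb2.le hb2'
  have hP2le : qPochInf q (q ^ (α * (k:ℝ) + 1)) ≤ 1 := qPoch_le_one hq0 hq1 hb3.le hb3'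
  have hPkle : qPochInf q (q ^ ((k:ℝ) + 1)) ≤ 1 := qPoch_le_one hq0 hq1 hb4.le hb4'
  -- key inequality
  have hqsplit : q ^ (α * ((k:ℝ) - 1) + 1) = t * q := by
    rw [htdef, Real.rpow_add hq0, Real.rpow_one]
  have hkey : c * qPochInf q (q ^ ((k:ℝ) + 1))
      ≤ A * qPochInf q (q ^ (α * ((k:ℝ) - 1) + 1)) - qPochInf q (q ^ (α * (k:ℝ) + 1)) := by
    have hAP1 : A * (1 - t * q / (1 - q)) ≤ A * qPochInf q (q ^ (α * ((k:ℝ) - 1) + 1)) := by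
      apply mul_le_mul_of_nonneg_left _ hA0.le
      rw [← hqsplit]; exact hP1low
    have step : c ≤ A * qPochInf q (q ^ (α * ((k:ℝ) - 1) + 1))
        - qPochInf q (q ^ (α * (k:ℝ) + 1)) := by
      have hexp : A * (1 - t * q / (1 - q)) = A - A * (t * q / (1 - q)) := by ring
      rw [hcdef]
      linarith [hAP1, hP2le, hε, hexp.le, hexp.ge]
    calc c * qPochInf q (q ^ ((k:ℝ) + 1)) ≤ c * 1 :=
          mul_le_mul_of_nonneg_left hPkle hc.le
      _ = c := mul_one c
      _ ≤ _ := step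
  -- rewrite both sides
  have erw1 : (1 - q) ^ ((α - 1) * (k:ℝ)) * (1 - q) ^ ((k:ℝ)) = (1 - q) ^ (α * (k:ℝ)) := by
    rw [← Real.rpow_add hu]; congr 1; ring
  have erw2 : (1 - q) ^ (α + 1 - 1 : ℝ) * (1 - q) ^ (α * ((k:ℝ) - 1) + 1 - 1)
      = (1 - q) ^ (α * (k:ℝ)) := by
    rw [← Real.rpow_add hu]; congr 1; ring
  have hL : c * ((1 - q) ^ ((α - 1) * (k:ℝ)) / qGamma q ((k:ℝ) + 1))
      = c * qPochInf q (q ^ ((k:ℝ) + 1)) * ((1 - q) ^ (α * (k:ℝ)) / qPochInf q q) := by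
    rw [div_eq_mul_inv, qGamma_inv hu.le, show (k:ℝ) + 1 - 1 = (k:ℝ) by ring]
    rw [show c * ((1 - q) ^ ((α - 1) * (k:ℝ)) *
        (qPochInf q (q ^ ((k:ℝ) + 1)) / qPochInf q q * (1 - q) ^ ((k:ℝ))))
      = c * qPochInf q (q ^ ((k:ℝ) + 1)) *
        (((1 - q) ^ ((α - 1) * (k:ℝ)) * (1 - q) ^ ((k:ℝ))) / qPochInf q q) by ring, erw1]
  have hR : Mq q α k
      = (A * qPochInf q (q ^ (α * ((k:ℝ) - 1) + 1)) - qPochInf q (q ^ (α * (k:ℝ) + 1)))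
        * ((1 - q) ^ (α * (k:ℝ)) / qPochInf q q) := by
    rw [Mq, div_eq_mul_inv, one_div, qGamma_inv hu.le, qGamma_inv hu.le, qGamma_inv hu.le]
    rw [hAdef]
    rw [show qPochInf q (q ^ (α + 1)) / qPochInf q q * (1 - q) ^ (α + 1 - 1) *
          (qPochInf q (q ^ (α * ((k:ℝ) - 1) + 1)) / qPochInf q q *
            (1 - q) ^ (α * ((k:ℝ) - 1) + 1 - 1)) -
          qPochInf q (q ^ (α * (k:ℝ) + 1)) / qPochInf q q * (1 - q) ^ (α * (k:ℝ) + 1 - 1)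
        = (qPochInf q (q ^ (α + 1)) / qPochInf q q *
            qPochInf q (q ^ (α * ((k:ℝ) - 1) + 1)))
          * (((1 - q) ^ (α + 1 - 1 : ℝ) * (1 - q) ^ (α * ((k:ℝ) - 1) + 1 - 1)) / qPochInf q q)
          - qPochInf q (q ^ (α * (k:ℝ) + 1)) * ((1 - q) ^ (α * (k:ℝ) + 1 - 1) / qPochInf q q)
        by ring]
    rw [erw2, show α * (k:ℝ) + 1 - 1 = α * (k:ℝ) by ring]
    ring
  rw [hL, hR]
  apply mul_le_mul_of_nonneg_right hkey
  positivity
end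

section
/- Let 0<q<1 and 0<α<1, and for an integer k≥1 set M_q(k) := Γ_q(α+1)^{−1}/Γ_q(α(k−1)+1) − 1/Γ_q(αk+1). Then there exists a constant C>0, depending only on q and α, such that for every integer k≥1 one has M_q(k) ≤ C·(1−q)^{(α−1)k}/Γ_q(k+1). -/
open scoped BigOperators

private lemma qfact {q a : ℝ} (hq0 : 0 < q) (hq1 : q < 1) (ha0 : 0 ≤ a) (ha1 : a < 1)
    (j : ℕ) : 0 ≤ q ^ j * a ∧ q ^ j * a < 1 := by
  refine ⟨by positivity, lt_of_le_of_lt ?_ ha1⟩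
  exact mul_le_of_le_one_left ha0 (pow_le_one₀ hq0.le hq1.le)

private lemma log_summable {q a : ℝ} (hq0 : 0 < q) (hq1 : q < 1) (ha0 : 0 ≤ a) (ha1 : a < 1) :
    Summable fun j : ℕ => Real.log (1 - q ^ j * a) := by
  apply Summable.of_norm
  apply Summable.of_nonneg_of_le (fun j => norm_nonneg _) (fun j => ?_)
    ((summable_geometric_of_lt_one hq0.le hq1).mul_right (a / (1 - a)))
  obtain ⟨h0, h1⟩ := qfact hq0 hq1 ha0 ha1 j
  have hpos : 0 < 1 - q ^ j * a := by linarith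
  rw [Real.norm_eq_abs, abs_of_nonpos (Real.log_nonpos (by linarith) (by linarith))]
  rw [← Real.log_inv]
  calc Real.log (1 - q ^ j * a)⁻¹ ≤ (1 - q ^ j * a)⁻¹ - 1 :=
        Real.log_le_sub_one_of_pos (by positivity)
    _ = (q ^ j * a) / (1 - q ^ j * a) := by field_simp; ring
    _ ≤ (q ^ j * a) / (1 - a) := by
        gcongr
        · exact mul_le_of_le_one_left ha0 (pow_le_one₀ hq0.le hq1.le)
    _ = q ^ j * (a / (1 - a)) := by rw [mul_div_assoc]

private lemma qPochInf_eq {q a : ℝ} (hq0 : 0 < q) (hq1 : q < 1) (ha0 : 0 ≤ a) (ha1 : a < 1) :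
    qPochInf q a = Real.exp (∑' j : ℕ, Real.log (1 - q ^ j * a)) := by
  have hs := (log_summable hq0 hq1 ha0 ha1).hasSum.rexp
  have he : (Real.exp ∘ fun j : ℕ => Real.log (1 - q ^ j * a)) =
      fun j : ℕ => 1 - q ^ j * a := by
    funext j
    obtain ⟨h0, h1⟩ := qfact hq0 hq1 ha0 ha1 j
    exact Real.exp_log (by linarith)
  rw [he] at hs
  exact hs.tprod_eq

private lemma qPochInf_pos {q a : ℝ} (hq0 : 0 < q) (hq1 : q < 1) (ha0 : 0 ≤ a) (ha1 : a < 1) :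
    0 < qPochInf q a := by
  rw [qPochInf_eq hq0 hq1 ha0 ha1]; exact Real.exp_pos _

private lemma qPochInf_le_one {q a : ℝ} (hq0 : 0 < q) (hq1 : q < 1) (ha0 : 0 ≤ a) (ha1 : a < 1) :
    qPochInf q a ≤ 1 := by
  rw [qPochInf_eq hq0 hq1 ha0 ha1, Real.exp_le_one_iff]
  apply tsum_nonpos
  intro j
  obtain ⟨h0, h1⟩ := qfact hq0 hq1 ha0 ha1 j
  exact Real.log_nonpos (by linarith) (by linarith)

private lemma qPochInf_anti {q a b : ℝ} (hq0 : 0 < q) (hq1 : q < 1) (ha0 : 0 ≤ a)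
    (hab : a ≤ b) (hb1 : b < 1) : qPochInf q b ≤ qPochInf q a := by
  have ha1 : a < 1 := lt_of_le_of_lt hab hb1
  have hb0 : 0 ≤ b := le_trans ha0 hab
  rw [qPochInf_eq hq0 hq1 ha0 ha1, qPochInf_eq hq0 hq1 hb0 hb1, Real.exp_le_exp]
  apply Summable.tsum_le_tsum (fun j => ?_) (log_summable hq0 hq1 hb0 hb1) (log_summable hq0 hq1 ha0 ha1)
  obtain ⟨h0, h1⟩ := qfact hq0 hq1 hb0 hb1 j
  apply Real.log_le_log (by linarith)
  have : q ^ j * a ≤ q ^ j * b := by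
    apply mul_le_mul_of_nonneg_left hab (by positivity)
  linarith

theorem Mq_upper_bound (q α : ℝ) (hq0 : 0 < q) (hq1 : q < 1)
    (hα0 : 0 < α) (hα1 : α < 1) :
    ∃ C : ℝ, 0 < C ∧ ∀ k : ℕ, 1 ≤ k →
      Mq q α k ≤ C * ((1 - q) ^ ((α - 1) * k) / qGamma q ((k : ℝ) + 1)) := by
  set u : ℝ := 1 - q with hu
  have hu0 : 0 < u := by simp [hu]; linarith
  -- basic facts about P x := qPochInf q (q ^ x) for x > 0
  have hrpow : ∀ x : ℝ, 0 < x → 0 ≤ q ^ x ∧ q ^ x < 1 := fun x hx =>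
    ⟨Real.rpow_nonneg hq0.le x, Real.rpow_lt_one hq0.le hq1 hx⟩
  have hP : ∀ x : ℝ, 0 < x → 0 < qPochInf q (q ^ x) := fun x hx =>
    qPochInf_pos hq0 hq1 (hrpow x hx).1 (hrpow x hx).2
  have hP1 : ∀ x : ℝ, 0 < x → qPochInf q (q ^ x) ≤ 1 := fun x hx =>
    qPochInf_le_one hq0 hq1 (hrpow x hx).1 (hrpow x hx).2
  have hPmono : ∀ x y : ℝ, 0 < x → x ≤ y →
      qPochInf q (q ^ x) ≤ qPochInf q (q ^ y) := by
    intro x y hx hxy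
    exact qPochInf_anti hq0 hq1 (hrpow y (lt_of_lt_of_le hx hxy)).1
      (Real.rpow_le_rpow_of_exponent_ge hq0 hq1.le hxy) (hrpow x hx).2
  have hD : 0 < qPochInf q q := qPochInf_pos hq0 hq1 hq0.le hq1
  set D : ℝ := qPochInf q q with hDdef
  -- positivity of qGamma
  have hΓ : ∀ x : ℝ, 0 < x → 0 < qGamma q x := by
    intro x hx
    unfold qGamma
    have := hP x hx
    positivity
  -- inverse formula
  have hinv : ∀ x : ℝ, 0 < x →
      (qGamma q x)⁻¹ = qPochInf q (q ^ x) / D * u ^ (x - 1) := by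
    intro x hx
    unfold qGamma
    rw [mul_inv, inv_div, ← Real.rpow_neg hu0.le, neg_sub]
  set P2 : ℝ := qPochInf q (q ^ (2:ℝ)) with hP2def
  have hP2 : 0 < P2 := hP 2 (by norm_num)
  set G : ℝ := (qGamma q (α + 1))⁻¹ with hGdef
  have hG : 0 < G := inv_pos.mpr (hΓ (α + 1) (by linarith))
  refine ⟨G * u ^ (-α) / P2, by positivity, ?_⟩
  intro k hk
  have hk1 : (1:ℝ) ≤ (k:ℝ) := by exact_mod_cast hk
  set x1 : ℝ := α * ((k:ℝ) - 1) + 1 with hx1def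
  set x2 : ℝ := α * (k:ℝ) + 1 with hx2def
  have hx1 : 0 < x1 := by nlinarith
  have hx2 : 0 < x2 := by nlinarith
  have hK : (0:ℝ) < (k:ℝ) + 1 := by linarith
  have hPk1 : P2 ≤ qPochInf q (q ^ ((k:ℝ)+1)) := hPmono 2 ((k:ℝ)+1) (by norm_num) (by linarith)
  set Pk : ℝ := qPochInf q (q ^ ((k:ℝ)+1)) with hPkdef
  have hPk0 : 0 < Pk := hP _ hK
  have e1 : u ^ (x1 - 1) = u ^ (α*(k:ℝ)) * u ^ (-α) := by
    rw [← Real.rpow_add hu0]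
    congr 1
    rw [hx1def]; ring
  have e2 : u ^ ((α-1)*(k:ℝ)) * u ^ ((k:ℝ)+1-1) = u ^ (α*(k:ℝ)) := by
    rw [← Real.rpow_add hu0]
    congr 1
    ring
  -- drop the negative part of Mq
  have step1 : Mq q α k ≤ G * (qGamma q x1)⁻¹ := by
    have h2 : 0 < qGamma q x2 := hΓ x2 hx2
    have h3 : 0 ≤ 1 / qGamma q x2 := by positivity
    have hMq : Mq q α k = G / qGamma q x1 - 1 / qGamma q x2 := rfl
    rw [hMq, div_eq_mul_inv]
    linarith
  have step2 : G * (qGamma q x1)⁻¹ ≤ G * (1 / D * u ^ (x1 - 1)) := by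
    rw [hinv x1 hx1]
    have h5 := hP1 x1 hx1
    have h4 : (0:ℝ) ≤ u ^ (x1 - 1) := Real.rpow_nonneg hu0.le _
    apply mul_le_mul_of_nonneg_left ?_ hG.le
    apply mul_le_mul_of_nonneg_right ?_ h4
    rw [div_le_div_iff₀ hD hD]
    nlinarith
  calc Mq q α k ≤ G * (qGamma q x1)⁻¹ := step1
    _ ≤ G * (1 / D * u ^ (x1 - 1)) := step2
    _ = G * u ^ (-α) / P2 * (P2 / D * (u ^ ((α-1)*(k:ℝ)) * u ^ ((k:ℝ)+1-1))) := by
        rw [e1, e2]; field_simp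
    _ ≤ G * u ^ (-α) / P2 * (Pk / D * (u ^ ((α-1)*(k:ℝ)) * u ^ ((k:ℝ)+1-1))) := by gcongr
    _ = G * u ^ (-α) / P2 * (u ^ ((α-1)*(k:ℝ)) / qGamma q ((k:ℝ)+1)) := by
        rw [div_eq_mul_inv (u ^ ((α-1)*(k:ℝ))), hinv ((k:ℝ)+1) hK]; ring
end
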